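/- Let K be a field with at least 3 elements and g a Lie algebra over K with [g,g] ≠ g. Then there exists a Lie algebra s over K and an injective map β : g → s satisfying β([x,y]) = [β(x), β(y)] for all x, y ∈ g, which is not additive. -/

import Mathlib

/-- Trivial central extension: Lie ring structure on `g × K` with bracket
`⁅(x,a),(y,b)⁆ = (⁅x,y⁆, 0)`. -/
@[reducible]
def centralExtLieRing (K : Type u) [Field K] (g : Type u) [LieRing g] :
    LieRing (g × K) where
  bracket p q := (⁅p.1, q.1⁆, 0)
  add_lie p q r := by ext <;> simp
  lie_add p q r := by ext <;> simp
  lie_self p := by ext <;> simp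
  leibniz_lie p q r := by ext <;> simp

def centralExtLieAlgebra (K : Type u) [Field K] (g : Type u) [LieRing g]
    [LieAlgebra K g] :
    letI := centralExtLieRing K g
    LieAlgebra K (g × K) :=
  letI := centralExtLieRing K g
  { toModule := inferInstance
    lie_smul := fun t p q => by
      show ((⁅p.1, t • q.1⁆ : g), (0 : K)) = t • (⁅p.1, q.1⁆, (0 : K))
      ext <;> simp }

theorem stmt_18 (K : Type u) [Field K] (hK : 3 ≤ Cardinal.mk K)
    (g : Type u) [LieRing g] [LieAlgebra K g]
    (hproper : ⁅(⊤ : LieIdeal K g), (⊤ : LieIdeal K g)⁆ ≠ ⊤) :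
    ∃ (s : Type u) (_ : LieRing s) (_ : LieAlgebra K s) (β : g → s),
      Function.Injective β ∧ (∀ x y : g, β ⁅x, y⁆ = ⁅β x, β y⁆) ∧
      ¬ (∀ x y : g, β (x + y) = β x + β y) := by
  classical
  -- there is `c : K` with `c ≠ 0` and `c ≠ 1`
  obtain ⟨c, hc0, hc1⟩ : ∃ c : K, c ≠ 0 ∧ c ≠ 1 := by
    by_contra h
    push_neg at h
    have hinj : Function.Injective (fun x : K => (ULift.up (decide (x = 1)) : ULift.{u} Bool)) := by
      intro a b hab
      rcases eq_or_ne a 0 with ha | ha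
      · rcases eq_or_ne b 0 with hb | hb
        · rw [ha, hb]
        · have hb1 := h b hb
          subst ha hb1
          simp at hab
      · have ha1 := h a ha
        rcases eq_or_ne b 0 with hb | hb
        · subst ha1 hb; simp at hab
        · rw [ha1, h b hb]
    have hle := Cardinal.mk_le_of_injective hinj
    rw [Cardinal.mk_uLift, Cardinal.mk_bool] at hle
    have h32 : (3 : Cardinal) ≤ 2 := hK.trans (by simpa using hle)
    norm_num at h32
  -- the derived submodule is proper
  set I : LieIdeal K g := ⁅(⊤ : LieIdeal K g), (⊤ : LieIdeal K g)⁆ with hI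
  have hsub : (I : Submodule K g) ≠ ⊤ := by
    intro h
    exact hproper ((LieSubmodule.toSubmodule_eq_top (N := I)).mp h)
  have : Nontrivial (g ⧸ (I : Submodule K g)) :=
    Submodule.Quotient.nontrivial_iff.mpr hsub
  obtain ⟨q, hq⟩ := exists_ne (0 : g ⧸ (I : Submodule K g))
  obtain ⟨φ, hφ⟩ : ∃ φ : Module.Dual K (g ⧸ (I : Submodule K g)), φ q ≠ 0 := by
    by_contra h
    push_neg at h
    exact hq ((Module.forall_dual_apply_eq_zero_iff K q).mp h)
  set f : g →ₗ[K] K := φ.comp (I : Submodule K g).mkQ with hf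
  -- f vanishes on brackets
  have hfbr : ∀ x y : g, f ⁅x, y⁆ = 0 := by
    intro x y
    have hmem : ⁅x, y⁆ ∈ I := by
      apply LieSubmodule.lie_mem_lie <;> exact LieSubmodule.mem_top _
    have hz : ((I : Submodule K g).mkQ) ⁅x, y⁆ = 0 := by
      rwa [Submodule.mkQ_apply, Submodule.Quotient.mk_eq_zero]
    rw [hf, LinearMap.comp_apply, hz, map_zero]
  -- f takes value 1 somewhere
  obtain ⟨x0, hx0⟩ : ∃ x0 : g, f x0 ≠ 0 := by
    obtain ⟨y0, hy0⟩ := (I : Submodule K g).mkQ_surjective q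
    refine ⟨y0, ?_⟩
    rw [hf, LinearMap.comp_apply, hy0]
    exact hφ
  set e : g := (f x0)⁻¹ • x0 with he
  have hfe : f e = 1 := by simp [he, inv_mul_cancel₀ hx0]
  -- the non-additive γ
  set γ : K → K := fun x => if x = 1 then 1 else 0 with hγ
  letI lr := centralExtLieRing K g
  letI la := centralExtLieAlgebra K g
  refine ⟨g × K, lr, la, fun x => (x, γ (f x)), ?_, ?_, ?_⟩
  · intro a b hab
    exact (Prod.ext_iff.mp hab).1
  · intro x y
    show (⁅x, y⁆, γ (f ⁅x, y⁆)) = (⁅x, y⁆, (0 : K))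
    rw [hfbr]
    simp [hγ]
  · intro h
    have := h e (c • e)
    have h2 : γ (f (e + c • e)) = γ (f e) + γ (f (c • e)) :=
      (Prod.ext_iff.mp this).2
    have hfc : f (c • e) = c := by rw [map_smul, hfe, smul_eq_mul, mul_one]
    have hsum : f (e + c • e) = 1 + c := by rw [map_add, hfe, hfc]
    rw [hsum, hfe, hfc] at h2
    simp only [hγ] at h2
    simp [hc1] at h2
    exact hc0 h2
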